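/- Suppose λ, μ > 0 and u² < f < ū where ū = (μu¹+λu²)/(λ+μ). Then there exist b > 0 and k₁, k₂ > 0 such that (b(f-u¹)-λ)k₁ + λk₂ ≤ -1 and μk₁ + (b(f-u²)-μ)k₂ ≤ -1. -/

import Mathlib

theorem exists_lyapunov (l m f u1 u2 : ℝ) (hl : 0 < l) (hm : 0 < m)
    (h1 : u2 < f) (h2 : f < (m * u1 + l * u2) / (l + m)) :
    ∃ b k1 k2 : ℝ, 0 < b ∧ 0 < k1 ∧ 0 < k2 ∧
      (b * (f - u1) - l) * k1 + l * k2 ≤ -1 ∧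
      m * k1 + (b * (f - u2) - m) * k2 ≤ -1 := by
  set a1 := u1 - f with ha1def
  set a2 := f - u2 with ha2def
  have ha2 : 0 < a2 := by simp [ha2def]; linarith
  have hlm : (0:ℝ) < l + m := by linarith
  rw [lt_div_iff₀ hlm] at h2
  have hkey : l * a2 < m * a1 := by simp only [ha1def, ha2def]; nlinarith
  have hla2 : 0 < l * a2 := mul_pos hl ha2
  have ha1 : 0 < a1 := by nlinarith
  set r := (l * a2 + m * a1) / (2 * (l * a2)) with hrdef
  have hr1 : 1 < r := by
    rw [hrdef, lt_div_iff₀ (by linarith)]; linarith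
  have hr0 : 0 < r := by linarith
  have hr2 : l * a2 * r < m * a1 := by
    have h : l * a2 * r = (l * a2 + m * a1) / 2 := by
      rw [hrdef]; field_simp
    rw [h]; linarith
  set A := l * (r - 1) / a1 with hAdef
  set B := m * (r - 1) / (a2 * r) with hBdef
  have ha2r : 0 < a2 * r := mul_pos ha2 hr0
  have hA0 : 0 < A := div_pos (mul_pos hl (by linarith)) ha1
  have hB0 : 0 < B := div_pos (mul_pos hm (by linarith)) ha2r
  have hAB : A < B := by
    rw [hAdef, hBdef, div_lt_div_iff₀ ha1 ha2r]
    nlinarith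
  have hAeq : a1 * A = l * (r - 1) := by
    rw [hAdef]; field_simp
  have hBeq : (a2 * r) * B = m * (r - 1) := by
    rw [hBdef]; field_simp
  set b := (A + B) / 2 with hbdef
  set d := (B - A) / 2 with hddef
  have hd0 : 0 < d := by rw [hddef]; linarith
  have hb0 : 0 < b := by rw [hbdef]; linarith
  have key1 : l * (r - 1) - b * a1 = -(a1 * d) := by
    rw [← hAeq, hbdef, hddef]; ring
  have key2 : m + (b * a2 - m) * r = -(a2 * r * d) := by
    have : b * a2 * r - m * (r - 1) = -(a2 * r * d) := by
      rw [← hBeq, hbdef, hddef]; ring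
    linarith [this]
  have ha1d : 0 < a1 * d := mul_pos ha1 hd0
  have ha2rd : 0 < a2 * r * d := mul_pos ha2r hd0
  set C := 1 / (a1 * d) + 1 / (a2 * r * d) with hCdef
  have hC0 : 0 < C := by positivity
  refine ⟨b, C, C * r, hb0, hC0, mul_pos hC0 hr0, ?_, ?_⟩
  · have e1 : (1 / (a1 * d)) * (a1 * d) = 1 := one_div_mul_cancel (ne_of_gt ha1d)
    have e2 : 0 ≤ (1 / (a2 * r * d)) * (a1 * d) := by positivity
    have h1' : C * (a1 * d) ≥ 1 := by
      have : C * (a1 * d) = (1 / (a1 * d)) * (a1 * d) + (1 / (a2 * r * d)) * (a1 * d) := by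
        rw [hCdef]; ring
      rw [this, e1]; linarith
    have hfu1 : f - u1 = -a1 := by rw [ha1def]; ring
    have eq1 : (b * (f - u1) - l) * C + l * (C * r) = C * (l * (r - 1) - b * a1) := by
      rw [hfu1]; ring
    have eq1' : C * (-(a1 * d)) = -(C * (a1 * d)) := by ring
    rw [eq1, key1, eq1']
    linarith
  · have e1 : (1 / (a2 * r * d)) * (a2 * r * d) = 1 := one_div_mul_cancel (ne_of_gt ha2rd)
    have e2 : 0 ≤ (1 / (a1 * d)) * (a2 * r * d) := by positivity
    have h2' : C * (a2 * r * d) ≥ 1 := by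
      have : C * (a2 * r * d) = (1 / (a1 * d)) * (a2 * r * d) + (1 / (a2 * r * d)) * (a2 * r * d) := by
        rw [hCdef]; ring
      rw [this, e1]; linarith
    have eq2 : m * C + (b * (f - u2) - m) * (C * r) = C * (m + (b * a2 - m) * r) := by
      have hfu2 : f - u2 = a2 := by rw [ha2def]
      rw [hfu2]; ring
    have eq2' : C * (-(a2 * r * d)) = -(C * (a2 * r * d)) := by ring
    rw [eq2, key2, eq2']
    linarith
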